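/- Let P(x) = ∑_{S ⊆ E, |S|=r} a_S x^S be a multiaffine homogeneous polynomial of degree r on a finite ground set E that is nonvanishing on H^E and not identically zero. Then the support {S : a_S ≠ 0} satisfies the basis-exchange axiom: for any S, T in the support and any e ∈ S \ T, there exists f ∈ T \ S with (S \ {e}) ∪ {f} in the support. -/

import Mathlib

open Finset Filter Topology Polynomial

namespace St13

lemma sum_single_apply {n : ℕ} (V : Finset (Fin n)) (j : Fin n) :
    (∑ i ∈ V, Finsupp.single i 1 : Fin n →₀ ℕ) j = if j ∈ V then 1 else 0 := by
  rw [Finset.sum_apply']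
  simp [Finsupp.single_apply, eq_comm]

lemma squarefree_eq {n : ℕ} (D : Fin n →₀ ℕ) (hD : ∀ i, D i ≤ 1) :
    D = ∑ i ∈ D.support, Finsupp.single i 1 := by
  ext j
  rw [sum_single_apply]
  by_cases h : j ∈ D.support
  · have := Finsupp.mem_support_iff.mp h
    have h2 := hD j
    simp only [h, if_true]
    omega
  · simp only [h, if_false]
    simpa using Finsupp.notMem_support_iff.mp h

lemma supp_of_sum_single {n : ℕ} (V : Finset (Fin n)) :
    (∑ i ∈ V, Finsupp.single i 1 : Fin n →₀ ℕ).support = V := by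
  ext j
  simp [Finsupp.mem_support_iff, sum_single_apply]

lemma degree_sum_single {n : ℕ} (V : Finset (Fin n)) :
    (∑ i ∈ V, Finsupp.single i 1 : Fin n →₀ ℕ).degree = V.card := by
  rw [Finsupp.degree_apply, supp_of_sum_single]
  simp [sum_single_apply]

variable {n : ℕ} (P : MvPolynomial (Fin n) ℂ) (S T : Finset (Fin n)) (e : Fin n) (u v : ℂ)

/-- the point of H^n at which we evaluate -/
noncomputable def pt (ζ : ℂ) (s : ℝ) : Fin n → ℂ := fun i =>
  if i = e then ζ else if i ∈ S ∩ T then (s : ℂ)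
  else if i ∈ S then u else if i ∈ T then v else ((s : ℂ))⁻¹

noncomputable def c1 (s : ℝ) : ℂ := ∑ D ∈ P.support.filter (fun D => e ∈ D.support),
    P.coeff D * ∏ i ∈ D.support.erase e, pt S T e u v 0 s i

noncomputable def c0 (s : ℝ) : ℂ := ∑ D ∈ P.support.filter (fun D => e ∉ D.support),
    P.coeff D * ∏ i ∈ D.support.erase e, pt S T e u v 0 s i

lemma sq_of_supp (hmaff : ∀ i, P.degreeOf i ≤ 1) {D : Fin n →₀ ℕ} (hD : D ∈ P.support) :
    ∀ i, D i ≤ 1 := by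
  intro i
  have h := hmaff i
  rw [MvPolynomial.degreeOf_eq_sup] at h
  exact le_trans (Finset.le_sup (f := fun m => m i) hD) h

lemma eval_split (hmaff : ∀ i, P.degreeOf i ≤ 1) (ζ : ℂ) (s : ℝ) :
    MvPolynomial.eval (pt S T e u v ζ s) P
      = c1 P S T e u v s * ζ + c0 P S T e u v s := by
  rw [MvPolynomial.eval_eq, c1, c0, Finset.sum_mul,
    ← Finset.sum_filter_add_sum_filter_not P.support (fun D => e ∈ D.support)]
  congr 1
  · apply Finset.sum_congr rfl
    intro D hD
    have hDs := (Finset.mem_filter.mp hD).1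
    have he : e ∈ D.support := (Finset.mem_filter.mp hD).2
    have hone : ∀ i ∈ D.support, pt S T e u v ζ s i ^ D i = pt S T e u v ζ s i := by
      intro i hi
      have h1 := sq_of_supp P hmaff hDs i
      have h2 := Finsupp.mem_support_iff.mp hi
      have : D i = 1 := by omega
      rw [this, pow_one]
    rw [Finset.prod_congr rfl hone, ← Finset.mul_prod_erase _ _ he]
    have hpe : pt S T e u v ζ s e = ζ := by simp [pt]
    have hrest : ∀ i ∈ D.support.erase e,
        pt S T e u v ζ s i = pt S T e u v 0 s i := by
      intro i hi
      have : i ≠ e := Finset.ne_of_mem_erase hi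
      simp only [pt, if_neg this]
    rw [Finset.prod_congr rfl hrest, hpe]
    ring
  · apply Finset.sum_congr rfl
    intro D hD
    have hDs := (Finset.mem_filter.mp hD).1
    have he : e ∉ D.support := (Finset.mem_filter.mp hD).2
    have hone : ∀ i ∈ D.support, pt S T e u v ζ s i ^ D i = pt S T e u v 0 s i := by
      intro i hi
      have h1 := sq_of_supp P hmaff hDs i
      have h2 := Finsupp.mem_support_iff.mp hi
      have h3 : D i = 1 := by omega
      have : i ≠ e := fun h => he (h ▸ hi)
      rw [h3, pow_one]
      simp only [pt, if_neg this]
    rw [Finset.prod_congr rfl hone, Finset.erase_eq_of_notMem he]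

lemma prod_pt (s : ℝ) (V : Finset (Fin n)) (heV : e ∉ V) :
    ∏ i ∈ V, pt S T e u v 0 s i
      = (s:ℂ) ^ (V ∩ (S ∩ T)).card *
        (u ^ (V ∩ (S \ T)).card * v ^ (V ∩ (T \ S)).card) *
        ((s:ℂ)⁻¹) ^ (V \ (S ∪ T)).card := by
  have hne : ∀ i ∈ V, i ≠ e := fun i hi h => heV (h ▸ hi)
  rw [← Finset.prod_filter_mul_prod_filter_not V (· ∈ S ∩ T)]
  rw [← Finset.prod_filter_mul_prod_filter_not (V.filter (· ∉ S ∩ T)) (· ∈ S)]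
  rw [← Finset.prod_filter_mul_prod_filter_not
      ((V.filter (· ∉ S ∩ T)).filter (· ∉ S)) (· ∈ T)]
  have e1 : V.filter (· ∈ S ∩ T) = V ∩ (S ∩ T) := Finset.filter_mem_eq_inter
  have e2 : (V.filter (· ∉ S ∩ T)).filter (· ∈ S) = V ∩ (S \ T) := by
    ext i; simp only [mem_filter, mem_inter, Finset.mem_sdiff]; tauto
  have e3 : ((V.filter (· ∉ S ∩ T)).filter (· ∉ S)).filter (· ∈ T) = V ∩ (T \ S) := by
    ext i; simp only [mem_filter, mem_inter, Finset.mem_sdiff]; tauto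
  have e4 : ((V.filter (· ∉ S ∩ T)).filter (· ∉ S)).filter (· ∉ T) = V \ (S ∪ T) := by
    ext i; simp only [mem_filter, Finset.mem_sdiff, mem_union, mem_inter]; tauto
  rw [e1, e2, e3, e4]
  have p1 : ∏ i ∈ V ∩ (S ∩ T), pt S T e u v 0 s i = (s:ℂ) ^ (V ∩ (S ∩ T)).card := by
    rw [Finset.prod_congr rfl (fun i hi => ?_), Finset.prod_const]
    have hiV : i ∈ V := (Finset.mem_inter.mp hi).1
    have him : i ∈ S ∩ T := (Finset.mem_inter.mp hi).2
    simp only [pt, if_neg (hne i hiV), if_pos him]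
  have p2 : ∏ i ∈ V ∩ (S \ T), pt S T e u v 0 s i = u ^ (V ∩ (S \ T)).card := by
    rw [Finset.prod_congr rfl (fun i hi => ?_), Finset.prod_const]
    have hiV : i ∈ V := (Finset.mem_inter.mp hi).1
    have him := Finset.mem_sdiff.mp (Finset.mem_inter.mp hi).2
    have h1 : i ∉ S ∩ T := by simp only [mem_inter]; tauto
    simp only [pt, if_neg (hne i hiV), if_neg h1, if_pos him.1]
  have p3 : ∏ i ∈ V ∩ (T \ S), pt S T e u v 0 s i = v ^ (V ∩ (T \ S)).card := by
    rw [Finset.prod_congr rfl (fun i hi => ?_), Finset.prod_const]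
    have hiV : i ∈ V := (Finset.mem_inter.mp hi).1
    have him := Finset.mem_sdiff.mp (Finset.mem_inter.mp hi).2
    have h1 : i ∉ S ∩ T := by simp only [mem_inter]; tauto
    simp only [pt, if_neg (hne i hiV), if_neg h1, if_neg him.2, if_pos him.1]
  have p4 : ∏ i ∈ V \ (S ∪ T), pt S T e u v 0 s i = ((s:ℂ)⁻¹) ^ (V \ (S ∪ T)).card := by
    rw [Finset.prod_congr rfl (fun i hi => ?_), Finset.prod_const]
    have hiV : i ∈ V := (Finset.mem_sdiff.mp hi).1
    have him := (Finset.mem_sdiff.mp hi).2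
    have h1 : i ∉ S ∩ T := by simp only [mem_inter, mem_union] at *; tauto
    have h2 : i ∉ S := by simp only [mem_union] at him; tauto
    have h3 : i ∉ T := by simp only [mem_union] at him; tauto
    simp only [pt, if_neg (hne i hiV), if_neg h1, if_neg h2, if_neg h3]
  rw [p1, p2, p3, p4]
  ring

lemma term_tendsto (m n1 n2 n3 n4 : ℕ) (hn3 : n3 ≤ m) (K : ℂ) :
    Tendsto (fun s : ℝ =>
        K * ((s:ℂ) ^ n3 * (u ^ n1 * v ^ n2) * ((s:ℂ)⁻¹) ^ n4) / (s:ℂ) ^ m)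
      atTop (𝓝 (if n3 = m ∧ n4 = 0 then K * (u ^ n1 * v ^ n2) else 0)) := by
  by_cases h : n3 = m ∧ n4 = 0
  · rw [if_pos h]
    obtain ⟨h3, h4⟩ := h
    subst h3; subst h4
    apply Tendsto.congr' _ tendsto_const_nhds
    filter_upwards [eventually_ge_atTop (1:ℝ)] with s hs
    have hs0 : (s:ℂ) ≠ 0 := by
      simp only [ne_eq, Complex.ofReal_eq_zero]; linarith
    field_simp
  · rw [if_neg h]
    apply squeeze_zero_norm' (a := fun s : ℝ => (‖K‖ * (‖u‖ ^ n1 * ‖v‖ ^ n2)) * s⁻¹)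
    · filter_upwards [eventually_ge_atTop (1:ℝ)] with s hs
      have hs0 : (0:ℝ) < s := by linarith
      have habs : |s| = s := abs_of_pos hs0
      have key : s ^ n3 * (s⁻¹) ^ n4 / s ^ m ≤ s⁻¹ := by
        have h1 : s ^ (n3+1) ≤ s ^ (n4+m) := by
          apply pow_le_pow_right₀ hs (by omega)
        rw [inv_pow, div_eq_mul_inv, mul_assoc, ← mul_inv, ← pow_add,
          ← div_eq_mul_inv, show s⁻¹ = 1/s by rw [one_div],
          div_le_div_iff₀ (by positivity) hs0, one_mul, ← pow_succ]
        exact h1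
      calc ‖K * ((s:ℂ) ^ n3 * (u ^ n1 * v ^ n2) * ((s:ℂ)⁻¹) ^ n4) / (s:ℂ) ^ m‖
          = ‖K‖ * (‖u‖ ^ n1 * ‖v‖ ^ n2) * (s ^ n3 * (s⁻¹) ^ n4 / s ^ m) := by
            simp only [norm_mul, norm_div, norm_pow, norm_inv, Complex.norm_real,
              Real.norm_eq_abs, habs]
            ring
        _ ≤ ‖K‖ * (‖u‖ ^ n1 * ‖v‖ ^ n2) * s⁻¹ := by
            apply mul_le_mul_of_nonneg_left key (by positivity)
    · simpa using (tendsto_inv_atTop_zero).const_mul (‖K‖ * (‖u‖ ^ n1 * ‖v‖ ^ n2))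

def jj (D : Fin n →₀ ℕ) : ℕ := ((D.support.erase e) ∩ (S \ T)).card

def ll (D : Fin n →₀ ℕ) : ℕ := (D.support ∩ (T \ S)).card

def good (D : Fin n →₀ ℕ) : Prop := S ∩ T ⊆ D.support ∧ D.support ⊆ S ∪ T

instance : DecidablePred (good S T) := fun D => by unfold good; infer_instance

lemma tendsto_sum (he : e ∈ S \ T) (F : Finset (Fin n →₀ ℕ)) :
    Tendsto (fun s : ℝ =>
        (∑ D ∈ F, P.coeff D * ∏ i ∈ D.support.erase e, pt S T e u v 0 s i)
          / (s:ℂ) ^ ((S ∩ T).card)) atTop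
      (𝓝 (∑ D ∈ F.filter (good S T),
        P.coeff D * (u ^ jj S T e D * v ^ ll S T D))) := by
  have heS : e ∈ S := (Finset.mem_sdiff.mp he).1
  have heT : e ∉ T := (Finset.mem_sdiff.mp he).2
  have key : ∀ D ∈ F, Tendsto (fun s : ℝ =>
      (P.coeff D * ∏ i ∈ D.support.erase e, pt S T e u v 0 s i) / (s:ℂ) ^ ((S∩T).card))
      atTop (𝓝 (if good S T D then P.coeff D * (u ^ jj S T e D * v ^ ll S T D) else 0)) := by
    intro D _
    set W := D.support.erase e with hW
    have heW : e ∉ W := Finset.notMem_erase _ _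
    have hW2 : W ∩ (T \ S) = D.support ∩ (T \ S) := by
      ext i
      simp only [hW, mem_inter, mem_erase, Finset.mem_sdiff]
      constructor
      · tauto
      · intro hi
        exact ⟨⟨fun h => hi.2.2 (h ▸ heS), hi.1⟩, hi.2⟩
    have hW3 : W ∩ (S ∩ T) = D.support ∩ (S ∩ T) := by
      ext i
      simp only [hW, mem_inter, mem_erase]
      constructor
      · tauto
      · intro hi
        exact ⟨⟨fun h => heT (h ▸ hi.2.2), hi.1⟩, hi.2⟩
    have hn3 : (W ∩ (S ∩ T)).card ≤ (S ∩ T).card :=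
      Finset.card_le_card Finset.inter_subset_right
    have heq : ∀ s : ℝ,
        (P.coeff D * ∏ i ∈ W, pt S T e u v 0 s i) / (s:ℂ) ^ ((S∩T).card)
        = P.coeff D * ((s:ℂ) ^ ((W ∩ (S∩T)).card) * (u ^ jj S T e D * v ^ ll S T D)
            * ((s:ℂ)⁻¹) ^ ((W \ (S ∪ T)).card)) / (s:ℂ) ^ ((S∩T).card) := by
      intro s
      rw [prod_pt S T e u v s W heW]
      rw [jj, ll, ← hW2]
    have hiff : ((W ∩ (S∩T)).card = (S∩T).card ∧ (W \ (S ∪ T)).card = 0)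
        ↔ good S T D := by
      rw [good]
      constructor
      · rintro ⟨h1, h2⟩
        constructor
        · have : W ∩ (S ∩ T) = S ∩ T := Finset.eq_of_subset_of_card_le
            Finset.inter_subset_right (by omega)
          rw [hW3] at this
          rw [← this]
          exact Finset.inter_subset_left
        · have h4 : W \ (S ∪ T) = ∅ := Finset.card_eq_zero.mp h2
          have h5 : W ⊆ S ∪ T := by
            rwa [Finset.sdiff_eq_empty_iff_subset] at h4
          intro i hi
          by_cases hie : i = e
          · subst hie; exact Finset.mem_union_left _ heS
          · exact h5 (Finset.mem_erase.mpr ⟨hie, hi⟩)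
      · rintro ⟨h1, h2⟩
        constructor
        · rw [hW3]
          have : D.support ∩ (S ∩ T) = S ∩ T := by
            rw [Finset.inter_eq_right]
            exact h1
          rw [this]
        · rw [Finset.card_eq_zero, Finset.sdiff_eq_empty_iff_subset]
          exact (Finset.erase_subset _ _).trans h2
    have := term_tendsto u v ((S∩T).card) (jj S T e D) (ll S T D)
      ((W ∩ (S∩T)).card) ((W \ (S ∪ T)).card) hn3 (P.coeff D)
    rw [if_congr hiff rfl rfl] at this
    exact Tendsto.congr (fun s => (heq s).symm) this
  have h2 := tendsto_finset_sum F key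
  rw [Finset.sum_filter]
  refine Tendsto.congr (fun s => ?_) h2
  rw [Finset.sum_div]

variable {r : ℕ}

lemma card_of_coeff_ne (hhom : P.IsHomogeneous r) {V : Finset (Fin n)}
    (h : P.coeff (∑ i ∈ V, Finsupp.single i 1) ≠ 0) : V.card = r := by
  by_contra hne
  apply h
  apply hhom.coeff_eq_zero
  rw [degree_sum_single]
  exact hne

lemma supp_card_of_mem (hmaff : ∀ i, P.degreeOf i ≤ 1) (hhom : P.IsHomogeneous r)
    {D : Fin n →₀ ℕ} (hD : D ∈ P.support) : D.support.card = r := by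
  have h1 := squarefree_eq D (sq_of_supp P hmaff hD)
  have h2 : P.coeff (∑ i ∈ D.support, Finsupp.single i 1) ≠ 0 := by
    rw [← h1]; exact MvPolynomial.mem_support_iff.mp hD
  exact card_of_coeff_ne P hhom h2

lemma count_part (he : e ∈ S \ T) {V : Finset (Fin n)} (hV : V ⊆ S ∪ T)
    (hIV : S ∩ T ⊆ V) :
    V.card = (S ∩ T).card + ((V.erase e) ∩ (S \ T)).card + (V ∩ (T \ S)).card
      + (if e ∈ V then 1 else 0) := by
  have hU : V = (V ∩ (S ∩ T)) ∪ ((V ∩ (S \ T)) ∪ (V ∩ (T \ S))) := by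
    ext i
    simp only [mem_union, mem_inter, Finset.mem_sdiff]
    constructor
    · intro hi
      have := hV hi
      simp only [mem_union] at this
      tauto
    · tauto
  have d1 : Disjoint (V ∩ (S ∩ T)) ((V ∩ (S \ T)) ∪ (V ∩ (T \ S))) := by
    rw [Finset.disjoint_left]
    intro i hi hi2
    simp only [mem_union, mem_inter, Finset.mem_sdiff] at hi hi2
    tauto
  have d2 : Disjoint (V ∩ (S \ T)) (V ∩ (T \ S)) := by
    rw [Finset.disjoint_left]
    intro i hi hi2
    simp only [mem_inter, Finset.mem_sdiff] at hi hi2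
    tauto
  have hc : V.card = (V ∩ (S ∩ T)).card + ((V ∩ (S \ T)).card + (V ∩ (T \ S)).card) := by
    conv_lhs => rw [hU]
    rw [Finset.card_union_of_disjoint d1, Finset.card_union_of_disjoint d2]
  have h1 : V ∩ (S ∩ T) = S ∩ T := Finset.inter_eq_right.mpr hIV
  have h2 : (V ∩ (S \ T)).card = ((V.erase e) ∩ (S \ T)).card + (if e ∈ V then 1 else 0) := by
    by_cases heV : e ∈ V
    · rw [if_pos heV]
      have : V ∩ (S \ T) = insert e ((V.erase e) ∩ (S \ T)) := by
        ext i
        simp only [mem_inter, mem_insert, mem_erase, Finset.mem_sdiff]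
        constructor
        · intro hi
          by_cases hie : i = e
          · left; exact hie
          · right; exact ⟨⟨hie, hi.1⟩, hi.2⟩
        · rintro (hi | hi)
          · subst hi
            exact ⟨heV, Finset.mem_sdiff.mp he⟩
          · exact ⟨hi.1.2, hi.2⟩
      rw [this, Finset.card_insert_of_notMem (by simp)]
    · rw [if_neg heV, Finset.erase_eq_of_notMem heV, add_zero]
  rw [hc, h1, h2]
  ring

noncomputable def pa : Polynomial ℂ :=
  ∑ D ∈ (P.support.filter (fun D => e ∈ D.support)).filter (good S T),
    Polynomial.C (P.coeff D) * Polynomial.X ^ (jj S T e D)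

noncomputable def pb : Polynomial ℂ :=
  ∑ D ∈ (P.support.filter (fun D => e ∉ D.support)).filter (good S T),
    Polynomial.C (P.coeff D) * Polynomial.X ^ (jj S T e D)

lemma coeff_CXpow (c : ℂ) (k q : ℕ) :
    (Polynomial.C c * Polynomial.X ^ k).coeff q = if q = k then c else 0 := by
  rw [Polynomial.coeff_C_mul, Polynomial.coeff_X_pow]
  split <;> simp

lemma pa_coeff (q : ℕ) : (pa P S T e).coeff q
    = ∑ D ∈ (P.support.filter (fun D => e ∈ D.support)).filter (good S T),
        (if q = jj S T e D then P.coeff D else 0) := by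
  rw [pa, Polynomial.finset_sum_coeff]
  exact Finset.sum_congr rfl (fun D _ => coeff_CXpow _ _ _)

lemma pb_coeff (q : ℕ) : (pb P S T e).coeff q
    = ∑ D ∈ (P.support.filter (fun D => e ∉ D.support)).filter (good S T),
        (if q = jj S T e D then P.coeff D else 0) := by
  rw [pb, Polynomial.finset_sum_coeff]
  exact Finset.sum_congr rfl (fun D _ => coeff_CXpow _ _ _)

section Main

variable (hmaff : ∀ i, P.degreeOf i ≤ 1) (hhom : P.IsHomogeneous r)
  (hS : P.coeff (∑ i ∈ S, Finsupp.single i 1) ≠ 0)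
  (hT : P.coeff (∑ i ∈ T, Finsupp.single i 1) ≠ 0)
  (he : e ∈ S \ T)

include hhom hS hT he

lemma cards : S.card = r ∧ T.card = r ∧ (S \ T).card = (T \ S).card
    ∧ (S ∩ T).card + (T \ S).card = r ∧ 1 ≤ (T \ S).card := by
  have h1 : S.card = r := card_of_coeff_ne P hhom hS
  have h2 : T.card = r := card_of_coeff_ne P hhom hT
  have h3 := Finset.card_inter_add_card_sdiff S T
  have h4 := Finset.card_inter_add_card_sdiff T S
  rw [Finset.inter_comm T S] at h4
  have h5 : 1 ≤ (S \ T).card := Finset.card_pos.mpr ⟨e, he⟩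
  omega

omit hhom hS hT in
lemma jj_le {D : Fin n →₀ ℕ} : jj S T e D ≤ (S \ T).card - 1 := by
  have h : (D.support.erase e) ∩ (S \ T) ⊆ (S \ T).erase e := by
    intro i hi
    simp only [mem_inter, mem_erase] at hi ⊢
    exact ⟨hi.1.1, hi.2⟩
  have := Finset.card_le_card h
  rw [Finset.card_erase_of_mem he] at this
  exact this

include hmaff

lemma fiberA {D : Fin n →₀ ℕ} (hD : D ∈ P.support) (hgood : good S T D)
    (heD : e ∈ D.support) (hjj : jj S T e D = (T \ S).card - 1) :
    D = ∑ i ∈ S, Finsupp.single i 1 := by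
  obtain ⟨hS1, hT1, hST, hmk, hk1⟩ := cards P S T e hhom hS hT he
  have hVr : D.support.card = r := supp_card_of_mem P hmaff hhom hD
  have hcount := count_part S T e he hgood.2 hgood.1
  rw [if_pos heD, hVr] at hcount
  have hll : ll S T D = 0 := by
    rw [jj] at hjj
    rw [ll]
    omega
  have hemp : D.support ∩ (T \ S) = ∅ := Finset.card_eq_zero.mp hll
  have hsub : D.support ⊆ S := by
    intro i hi
    have hi2 := hgood.2 hi
    rw [Finset.mem_union] at hi2
    by_cases hiS : i ∈ S
    · exact hiS
    · exfalso
      have : i ∈ D.support ∩ (T \ S) := by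
        rw [Finset.mem_inter, Finset.mem_sdiff]
        exact ⟨hi, by tauto, hiS⟩
      rw [hemp] at this
      exact absurd this (Finset.notMem_empty i)
  have hVS : D.support = S := Finset.eq_of_subset_of_card_le hsub (by omega)
  rw [squarefree_eq D (sq_of_supp P hmaff hD), hVS]

lemma fiberB0 {D : Fin n →₀ ℕ} (hD : D ∈ P.support) (hgood : good S T D)
    (heD : e ∉ D.support) (hjj : jj S T e D = 0) :
    D = ∑ i ∈ T, Finsupp.single i 1 := by
  obtain ⟨hS1, hT1, hST, hmk, hk1⟩ := cards P S T e hhom hS hT he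
  have hVr : D.support.card = r := supp_card_of_mem P hmaff hhom hD
  have hcount := count_part S T e he hgood.2 hgood.1
  rw [if_neg heD, hVr] at hcount
  have hjj2 : (D.support ∩ (S \ T)).card = 0 := by
    rw [jj, Finset.erase_eq_of_notMem heD] at hjj
    exact hjj
  have hemp : D.support ∩ (S \ T) = ∅ := Finset.card_eq_zero.mp hjj2
  have hsub : D.support ⊆ T := by
    intro i hi
    have hi2 := hgood.2 hi
    rw [Finset.mem_union] at hi2
    by_cases hiT : i ∈ T
    · exact hiT
    · exfalso
      have : i ∈ D.support ∩ (S \ T) := by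
        rw [Finset.mem_inter, Finset.mem_sdiff]
        exact ⟨hi, by tauto, hiT⟩
      rw [hemp] at this
      exact absurd this (Finset.notMem_empty i)
  have hVT : D.support = T := Finset.eq_of_subset_of_card_le hsub (by omega)
  rw [squarefree_eq D (sq_of_supp P hmaff hD), hVT]

lemma fiberB1
    (hcon : ∀ f ∈ T \ S, P.coeff (∑ i ∈ insert f (S.erase e), Finsupp.single i 1) = 0)
    {D : Fin n →₀ ℕ} (hD : D ∈ P.support) (hgood : good S T D)
    (heD : e ∉ D.support) (hjj : jj S T e D = (T \ S).card - 1) : False := by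
  obtain ⟨hS1, hT1, hST, hmk, hk1⟩ := cards P S T e hhom hS hT he
  have hVr : D.support.card = r := supp_card_of_mem P hmaff hhom hD
  have hcount := count_part S T e he hgood.2 hgood.1
  rw [if_neg heD, hVr] at hcount
  rw [jj, Finset.erase_eq_of_notMem heD] at hjj
  rw [Finset.erase_eq_of_notMem heD] at hcount
  have hll : (D.support ∩ (T \ S)).card = 1 := by omega
  obtain ⟨f, hf⟩ := Finset.card_eq_one.mp hll
  have hfTS : f ∈ T \ S := by
    have : f ∈ D.support ∩ (T \ S) := by rw [hf]; exact Finset.mem_singleton_self f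
    exact (Finset.mem_inter.mp this).2
  have hfD : f ∈ D.support := by
    have : f ∈ D.support ∩ (T \ S) := by rw [hf]; exact Finset.mem_singleton_self f
    exact (Finset.mem_inter.mp this).1
  -- V ∩ (S \ T) = (S \ T).erase e
  have hsub2 : D.support ∩ (S \ T) ⊆ (S \ T).erase e := by
    intro i hi
    rw [Finset.mem_inter] at hi
    rw [Finset.mem_erase]
    exact ⟨fun h => heD (h ▸ hi.1), hi.2⟩
  have hcard2 : ((S \ T).erase e).card = (S \ T).card - 1 :=
    Finset.card_erase_of_mem he
  have hSe : D.support ∩ (S \ T) = (S \ T).erase e := by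
    apply Finset.eq_of_subset_of_card_le hsub2
    omega
  have heT' : e ∉ T := (Finset.mem_sdiff.mp he).2
  have heS' : e ∈ S := (Finset.mem_sdiff.mp he).1
  have hVeq : D.support = insert f (S.erase e) := by
    ext i
    rw [Finset.mem_insert, Finset.mem_erase]
    constructor
    · intro hi
      have hi2 := hgood.2 hi
      rw [Finset.mem_union] at hi2
      by_cases hiS : i ∈ S
      · by_cases hiT : i ∈ T
        · right
          refine ⟨fun h => heT' (h ▸ hiT), hiS⟩
        · have : i ∈ D.support ∩ (S \ T) := by
            rw [Finset.mem_inter, Finset.mem_sdiff]; exact ⟨hi, hiS, hiT⟩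
          rw [hSe, Finset.mem_erase] at this
          right; exact ⟨this.1, hiS⟩
      · have hiT : i ∈ T := by tauto
        have : i ∈ D.support ∩ (T \ S) := by
          rw [Finset.mem_inter, Finset.mem_sdiff]; exact ⟨hi, hiT, hiS⟩
        rw [hf, Finset.mem_singleton] at this
        left; exact this
    · rintro (hi | hi)
      · subst hi; exact hfD
      · by_cases hiT : i ∈ T
        · exact hgood.1 (Finset.mem_inter.mpr ⟨hi.2, hiT⟩)
        · have : i ∈ (S \ T).erase e := by
            rw [Finset.mem_erase, Finset.mem_sdiff]
            exact ⟨hi.1, hi.2, hiT⟩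
          rw [← hSe, Finset.mem_inter] at this
          exact this.1
  have hzero := hcon f hfTS
  have : P.coeff D = 0 := by
    rw [squarefree_eq D (sq_of_supp P hmaff hD), hVeq]
    exact hzero
  exact (MvPolynomial.mem_support_iff.mp hD) this

end Main

section Main
variable (hmaff : ∀ i, P.degreeOf i ≤ 1) (hhom : P.IsHomogeneous r)
  (hS : P.coeff (∑ i ∈ S, Finsupp.single i 1) ≠ 0)
  (hT : P.coeff (∑ i ∈ T, Finsupp.single i 1) ≠ 0)
  (he : e ∈ S \ T)
include hmaff hhom hS hT he

lemma jj_DS : jj S T e (∑ i ∈ S, Finsupp.single i 1) = (T \ S).card - 1 := by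
  obtain ⟨hS1, hT1, hST, hmk, hk1⟩ := cards P S T e hhom hS hT he
  rw [jj, supp_of_sum_single]
  have : S.erase e ∩ (S \ T) = (S \ T).erase e := by
    ext i
    simp only [mem_inter, mem_erase, Finset.mem_sdiff]
    tauto
  rw [this, Finset.card_erase_of_mem he, hST]

lemma DS_mem : (∑ i ∈ S, Finsupp.single i 1) ∈
    (P.support.filter (fun D => e ∈ D.support)).filter (good S T) := by
  have heS : e ∈ S := (Finset.mem_sdiff.mp he).1
  rw [Finset.mem_filter, Finset.mem_filter]
  refine ⟨⟨MvPolynomial.mem_support_iff.mpr hS, ?_⟩, ?_, ?_⟩ <;>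
    rw [supp_of_sum_single]
  · exact heS
  · exact Finset.inter_subset_left
  · exact Finset.subset_union_left

lemma DT_mem : (∑ i ∈ T, Finsupp.single i 1) ∈
    (P.support.filter (fun D => e ∉ D.support)).filter (good S T) := by
  have heT : e ∉ T := (Finset.mem_sdiff.mp he).2
  rw [Finset.mem_filter, Finset.mem_filter]
  refine ⟨⟨MvPolynomial.mem_support_iff.mpr hT, ?_⟩, ?_, ?_⟩
  · rw [supp_of_sum_single]; exact heT
  · show S ∩ T ⊆ _
    rw [supp_of_sum_single]; exact Finset.inter_subset_right
  · show _ ⊆ S ∪ T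
    rw [supp_of_sum_single]; exact Finset.subset_union_right

lemma pa_coeff_top : (pa P S T e).coeff ((T \ S).card - 1)
    = P.coeff (∑ i ∈ S, Finsupp.single i 1) := by
  rw [pa_coeff]
  rw [Finset.sum_eq_single_of_mem _ (DS_mem P S T e hmaff hhom hS hT he)]
  · rw [if_pos (jj_DS P S T e hmaff hhom hS hT he).symm]
  · intro D hD hne
    rw [Finset.mem_filter, Finset.mem_filter] at hD
    by_cases hjj : (T \ S).card - 1 = jj S T e D
    · exfalso
      exact hne (fiberA P S T e hmaff hhom hS hT he hD.1.1 hD.2 hD.1.2 hjj.symm)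
    · rw [if_neg hjj]

lemma pa_natDegree : (pa P S T e).natDegree = (T \ S).card - 1 := by
  obtain ⟨hS1, hT1, hST, hmk, hk1⟩ := cards P S T e hhom hS hT he
  apply Polynomial.natDegree_eq_of_le_of_coeff_ne_zero
  · rw [pa]
    apply Polynomial.natDegree_sum_le_of_forall_le
    intro D hD
    refine le_trans (Polynomial.natDegree_C_mul_X_pow_le _ _) ?_
    have := jj_le S T e he (D := D)
    omega
  · rw [pa_coeff_top P S T e hmaff hhom hS hT he]
    exact hS

lemma pa_lead : (pa P S T e).leadingCoeff = P.coeff (∑ i ∈ S, Finsupp.single i 1) := by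
  rw [Polynomial.leadingCoeff, pa_natDegree P S T e hmaff hhom hS hT he,
    pa_coeff_top P S T e hmaff hhom hS hT he]

lemma jj_DT : jj S T e (∑ i ∈ T, Finsupp.single i 1) = 0 := by
  have heT : e ∉ T := (Finset.mem_sdiff.mp he).2
  rw [jj, supp_of_sum_single, Finset.card_eq_zero]
  ext i
  simp only [mem_inter, mem_erase, Finset.mem_sdiff, Finset.notMem_empty, iff_false]
  tauto

lemma pb_coeff_zero : (pb P S T e).coeff 0
    = P.coeff (∑ i ∈ T, Finsupp.single i 1) := by
  rw [pb_coeff]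
  rw [Finset.sum_eq_single_of_mem _ (DT_mem P S T e hmaff hhom hS hT he)]
  · rw [if_pos (jj_DT P S T e hmaff hhom hS hT he).symm]
  · intro D hD hne
    rw [Finset.mem_filter, Finset.mem_filter] at hD
    by_cases hjj : 0 = jj S T e D
    · exact absurd (fiberB0 P S T e hmaff hhom hS hT he hD.1.1 hD.2 hD.1.2 hjj.symm) hne
    · rw [if_neg hjj]

lemma pb_natDegree_le
    (hcon : ∀ f ∈ T \ S, P.coeff (∑ i ∈ insert f (S.erase e), Finsupp.single i 1) = 0) :
    (pb P S T e).natDegree ≤ (T \ S).card - 2 := by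
  obtain ⟨hS1, hT1, hST, hmk, hk1⟩ := cards P S T e hhom hS hT he
  rw [Polynomial.natDegree_le_iff_coeff_eq_zero]
  intro q hq
  rw [pb_coeff]
  apply Finset.sum_eq_zero
  intro D hD
  rw [Finset.mem_filter, Finset.mem_filter] at hD
  by_cases hjj : q = jj S T e D
  · exfalso
    have hle := jj_le S T e he (D := D)
    have : jj S T e D = (T \ S).card - 1 := by omega
    exact fiberB1 P S T e hmaff hhom hS hT he hcon hD.1.1 hD.2 hD.1.2 this
  · rw [if_neg hjj]

-- counting for A0/B0 identities
lemma jl_A {D : Fin n →₀ ℕ}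
    (hD : D ∈ (P.support.filter (fun D => e ∈ D.support)).filter (good S T)) :
    jj S T e D + ll S T D + 1 = (T \ S).card := by
  obtain ⟨hS1, hT1, hST, hmk, hk1⟩ := cards P S T e hhom hS hT he
  rw [Finset.mem_filter, Finset.mem_filter] at hD
  have hVr : D.support.card = r := supp_card_of_mem P hmaff hhom hD.1.1
  have hcount := count_part S T e he hD.2.2 hD.2.1
  rw [if_pos hD.1.2, hVr] at hcount
  rw [jj, ll]
  omega

lemma jl_B {D : Fin n →₀ ℕ}
    (hD : D ∈ (P.support.filter (fun D => e ∉ D.support)).filter (good S T)) :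
    jj S T e D + ll S T D = (T \ S).card := by
  obtain ⟨hS1, hT1, hST, hmk, hk1⟩ := cards P S T e hhom hS hT he
  rw [Finset.mem_filter, Finset.mem_filter] at hD
  have hVr : D.support.card = r := supp_card_of_mem P hmaff hhom hD.1.1
  have hcount := count_part S T e he hD.2.2 hD.2.1
  rw [if_neg hD.1.2, hVr] at hcount
  rw [jj, ll]
  omega

lemma A0_eq (hv : v ≠ 0) :
    (∑ D ∈ (P.support.filter (fun D => e ∈ D.support)).filter (good S T),
      P.coeff D * (u ^ jj S T e D * v ^ ll S T D))
    = v ^ ((T \ S).card - 1) * (pa P S T e).eval (u / v) := by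
  rw [pa, Polynomial.eval_finset_sum, Finset.mul_sum]
  apply Finset.sum_congr rfl
  intro D hD
  have hjl := jl_A P S T e hmaff hhom hS hT he hD
  simp only [Polynomial.eval_mul, Polynomial.eval_C, Polynomial.eval_pow, Polynomial.eval_X]
  rw [div_pow]
  have hsplit : v ^ ((T \ S).card - 1) = v ^ (ll S T D) * v ^ (jj S T e D) := by
    rw [← pow_add]
    congr 1
    omega
  rw [hsplit]
  field_simp

lemma B0_eq (hv : v ≠ 0) :
    (∑ D ∈ (P.support.filter (fun D => e ∉ D.support)).filter (good S T),
      P.coeff D * (u ^ jj S T e D * v ^ ll S T D))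
    = v ^ ((T \ S).card) * (pb P S T e).eval (u / v) := by
  rw [pb, Polynomial.eval_finset_sum, Finset.mul_sum]
  apply Finset.sum_congr rfl
  intro D hD
  have hjl := jl_B P S T e hmaff hhom hS hT he hD
  simp only [Polynomial.eval_mul, Polynomial.eval_C, Polynomial.eval_pow, Polynomial.eval_X]
  rw [div_pow]
  have hsplit : v ^ ((T \ S).card) = v ^ (ll S T D) * v ^ (jj S T e D) := by
    rw [← pow_add]
    congr 1
    omega
  rw [hsplit]
  field_simp

end Main

section UV
open Complex

lemma poly_lim (p : Polynomial ℂ) (ω : ℂ) :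
    Tendsto (fun R : ℝ => p.eval ((R:ℂ) * ω) / (R:ℂ) ^ p.natDegree) atTop
      (𝓝 (p.leadingCoeff * ω ^ p.natDegree)) := by
  set d := p.natDegree with hd
  have key : ∀ i ∈ Finset.range (d+1),
      Tendsto (fun R : ℝ => (p.coeff i * ω ^ i) * ((R:ℂ) ^ i / (R:ℂ) ^ d)) atTop
        (𝓝 (if i = d then p.leadingCoeff * ω ^ d else 0)) := by
    intro i hi
    rw [Finset.mem_range] at hi
    by_cases hid : i = d
    · subst hid
      rw [if_pos rfl]
      apply Tendsto.congr' _ tendsto_const_nhds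
      filter_upwards [eventually_ge_atTop (1:ℝ)] with R hR
      have hR0 : (R:ℂ) ≠ 0 := by
        simp only [ne_eq, Complex.ofReal_eq_zero]; linarith
      rw [div_self (pow_ne_zero _ hR0), mul_one]
      rfl
    · rw [if_neg hid]
      have hlt : i < d := by omega
      apply squeeze_zero_norm' (a := fun R : ℝ => (‖p.coeff i‖ * ‖ω‖ ^ i) * R⁻¹)
      · filter_upwards [eventually_ge_atTop (1:ℝ)] with R hR
        have hR0 : (0:ℝ) < R := by linarith
        have habs : |R| = R := abs_of_pos hR0
        have key2 : R ^ i / R ^ d ≤ R⁻¹ := by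
          have h1 : R ^ (i+1) ≤ R ^ d := pow_le_pow_right₀ hR (by omega)
          rw [div_le_iff₀ (by positivity), inv_mul_eq_div, le_div_iff₀ hR0, ← pow_succ]
          exact h1
        calc ‖p.coeff i * ω ^ i * ((R:ℂ) ^ i / (R:ℂ) ^ d)‖
            = ‖p.coeff i‖ * ‖ω‖ ^ i * (R ^ i / R ^ d) := by
              simp only [norm_mul, norm_div, norm_pow, Complex.norm_real,
                Real.norm_eq_abs, habs]
          _ ≤ ‖p.coeff i‖ * ‖ω‖ ^ i * R⁻¹ :=
              mul_le_mul_of_nonneg_left key2 (by positivity)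
      · simpa using tendsto_inv_atTop_zero.const_mul (‖p.coeff i‖ * ‖ω‖ ^ i)
  have hsum := tendsto_finset_sum _ key
  rw [Finset.sum_ite_eq' (Finset.range (d+1)) d
    (fun _ => p.leadingCoeff * ω ^ d), if_pos (Finset.self_mem_range_succ d)] at hsum
  apply hsum.congr
  intro R
  rw [Polynomial.eval_eq_sum_range, Finset.sum_div]
  apply Finset.sum_congr rfl
  intro i _
  rw [mul_pow]
  ring

lemma exists_uv (k1 : ℕ) (a b : Polynomial ℂ) (ha : a.natDegree = k1) (ha0 : a ≠ 0)
    (hb0 : b ≠ 0) (hbd : b.natDegree < k1) :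
    ∃ u v : ℂ, 0 < u.re ∧ 0 < v.re ∧ v ≠ 0 ∧ a.eval (u / v) ≠ 0 ∧
      0 < (-(v ^ (k1 + 1) * b.eval (u / v)) / (v ^ k1 * a.eval (u / v))).re := by
  set d := b.natDegree with hdd
  set α := a.leadingCoeff with hα
  set c := b.leadingCoeff with hc
  have hαne : α ≠ 0 := Polynomial.leadingCoeff_ne_zero.mpr ha0
  have hcne : c ≠ 0 := Polynomial.leadingCoeff_ne_zero.mpr hb0
  set γ : ℂ := -c / α with hγ
  have hγne : γ ≠ 0 := div_ne_zero (neg_ne_zero.mpr hcne) hαne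
  set M : ℕ := 2 * (k1 - d) + 1 with hM
  have hM3 : 3 ≤ M := by omega
  set θ : ℝ := γ.arg with hθ
  set φ : ℝ := -θ / M with hφ
  have hθle : |θ| ≤ Real.pi := Complex.abs_arg_le_pi γ
  have hπ := Real.pi_pos
  have hφle : |φ| ≤ Real.pi / 3 := by
    rw [hφ, abs_div, abs_neg]
    rw [div_le_div_iff₀ (by positivity) (by norm_num)]
    calc |θ| * 3 ≤ Real.pi * 3 := by nlinarith [abs_nonneg θ]
      _ ≤ Real.pi * |(M:ℝ)| := by
          have h3 : (3:ℝ) ≤ (M:ℝ) := by exact_mod_cast hM3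
          rw [_root_.abs_of_nonneg (by positivity : (0:ℝ) ≤ (M:ℝ))]
          nlinarith
  have hcos : 0 < Real.cos φ := by
    apply Real.cos_pos_of_mem_Ioo
    constructor
    · cases abs_le.mp hφle with
      | intro h1 h2 => nlinarith
    · cases abs_le.mp hφle with
      | intro h1 h2 => nlinarith
  set v : ℂ := Complex.exp (φ * I) with hv
  set ω : ℂ := Complex.exp (-(2*φ) * I) with hω
  have hvne : v ≠ 0 := Complex.exp_ne_zero _
  have hωne : ω ≠ 0 := Complex.exp_ne_zero _
  have hvre : v.re = Real.cos φ := by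
    rw [hv, Complex.exp_ofReal_mul_I_re]
  -- limits
  have hLa := poly_lim a ω
  have hLb := poly_lim b ω
  rw [ha] at hLa
  have hLane : α * ω ^ k1 ≠ 0 := mul_ne_zero hαne (pow_ne_zero _ hωne)
  -- the expression E R
  set E : ℝ → ℂ := fun R => -(v * b.eval ((R:ℂ) * ω)) / a.eval ((R:ℂ) * ω) with hE
  have hlim : Tendsto (fun R : ℝ => E R * (R:ℂ) ^ (k1 - d)) atTop
      (𝓝 (((‖γ‖ : ℝ) : ℂ))) := by
    have h1 : Tendsto (fun R : ℝ =>
        -v * ((b.eval ((R:ℂ) * ω) / (R:ℂ) ^ d) / (a.eval ((R:ℂ) * ω) / (R:ℂ) ^ k1)))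
        atTop (𝓝 (-v * ((c * ω ^ d) / (α * ω ^ k1)))) :=
      Tendsto.const_mul _ (hLb.div hLa hLane)
    have heq : -v * ((c * ω ^ d) / (α * ω ^ k1)) = ((‖γ‖ : ℝ) : ℂ) := by
      have hsplit : (ω : ℂ) ^ k1 = ω ^ d * ω ^ (k1 - d) := by
        rw [← pow_add]
        congr 1
        omega
      rw [hsplit]
      rw [show -v * (c * ω ^ d / (α * (ω ^ d * ω ^ (k1 - d)))) =
        (-c/α) * (v / ω ^ (k1 - d)) * (ω ^ d / ω ^ d) by ring]
      rw [div_self (pow_ne_zero _ hωne), mul_one]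
      have hexp : v / ω ^ (k1 - d) = Complex.exp ((M * φ : ℝ) * I) := by
        rw [hv, hω, ← Complex.exp_nat_mul, ← Complex.exp_sub]
        congr 1
        push_cast [hM]
        ring
      rw [hexp, ← hγ]
      have hMne : ((M:ℝ)) ≠ 0 := by positivity
      have : ((M * φ : ℝ) : ℂ) = (-θ : ℝ) := by
        have : (M:ℝ) * φ = -θ := by
          rw [hφ, mul_comm, div_mul_cancel₀ _ hMne]
        rw [this]
      rw [this]
      -- γ * exp(-θ I) = |γ|
      have habs := Complex.norm_mul_exp_arg_mul_I γ
      rw [← hθ] at habs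
      calc γ * Complex.exp ((-θ:ℝ) * I)
          = ((‖γ‖ : ℝ) : ℂ) * Complex.exp ((θ:ℝ) * I) * Complex.exp ((-θ:ℝ) * I) := by
            rw [habs]
        _ = ((‖γ‖ : ℝ) : ℂ) * Complex.exp ((θ + -θ : ℝ) * I) := by
            rw [mul_assoc, ← Complex.exp_add]
            push_cast
            ring_nf
        _ = ((‖γ‖ : ℝ) : ℂ) := by
            simp
      
    rw [← heq]
    apply h1.congr'
    filter_upwards [eventually_ge_atTop (1:ℝ), hLa.eventually_ne hLane] with R hR hane
    have hR0 : (R:ℂ) ≠ 0 := by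
      simp only [ne_eq, Complex.ofReal_eq_zero]; linarith
    have haevne : a.eval ((R:ℂ) * ω) ≠ 0 := by
      intro h
      apply hane
      rw [h, zero_div]
    rw [hE]
    have hpow : (R:ℂ) ^ k1 = (R:ℂ) ^ (k1 - d) * (R:ℂ) ^ d := by
      rw [← pow_add]
      congr 1
      omega
    field_simp
    rw [hpow]
    ring
  -- choose R
  have hpos : 0 < ((‖γ‖ : ℝ) : ℂ).re := by
    simp only [Complex.ofReal_re]
    exact norm_pos_iff.mpr hγne
  have hre := (Complex.continuous_re.tendsto _).comp hlim
  have hev1 : ∀ᶠ R : ℝ in atTop, 0 < ((E R * (R:ℂ) ^ (k1 - d)).re) :=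
    hre.eventually_const_lt hpos
  have hev2 : ∀ᶠ R : ℝ in atTop, a.eval ((R:ℂ) * ω) ≠ 0 := by
    filter_upwards [hLa.eventually_ne hLane] with R hR h
    apply hR
    rw [h, zero_div]
  obtain ⟨R, hR1, hRa, hR0⟩ := (hev1.and (hev2.and (eventually_gt_atTop (0:ℝ)))).exists
  refine ⟨(R:ℂ) * ω * v, v, ?_, ?_, hvne, ?_, ?_⟩
  · have hu : (R:ℂ) * ω * v = (R:ℂ) * Complex.exp ((-φ : ℝ) * I) := by
      rw [hω, hv, mul_assoc, ← Complex.exp_add]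
      congr 2
      push_cast
      ring
    rw [hu, Complex.re_ofReal_mul, Complex.exp_ofReal_mul_I_re, Real.cos_neg]
    exact mul_pos hR0 hcos
  · rw [hvre]; exact hcos
  · rw [mul_div_assoc, div_self hvne, mul_one]
    exact hRa
  · rw [mul_div_assoc, div_self hvne, mul_one]
    have hEeq : -((v:ℂ) ^ (k1 + 1) * b.eval ((R:ℂ) * ω)) / (v ^ k1 * a.eval ((R:ℂ) * ω))
        = E R := by
      rw [hE, pow_succ]
      rw [show -(v ^ k1 * v * b.eval ((R:ℂ) * ω)) = v ^ k1 * (-(v * b.eval ((R:ℂ) * ω))) by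
        ring]
      rw [mul_div_mul_left _ _ (pow_ne_zero _ hvne)]
    rw [hEeq]
    have hcast : (R:ℂ) ^ (k1 - d) = ((R ^ (k1 - d) : ℝ) : ℂ) := by push_cast; rfl
    rw [hcast, mul_comm, Complex.re_ofReal_mul] at hR1
    have hRp : (0:ℝ) < R ^ (k1 - d) := by positivity
    nlinarith [hR1]

end UV
end St13

theorem stmt13 {n r : ℕ} (P : MvPolynomial (Fin n) ℂ)
    (hmaff : ∀ i, P.degreeOf i ≤ 1)
    (hhom : P.IsHomogeneous r)
    (hne : P ≠ 0)
    (hP : ∀ x : Fin n → ℂ, (∀ i, 0 < (x i).re) → MvPolynomial.eval x P ≠ 0) :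
    ∀ S T : Finset (Fin n),
      P.coeff (∑ i ∈ S, Finsupp.single i 1) ≠ 0 →
      P.coeff (∑ i ∈ T, Finsupp.single i 1) ≠ 0 →
      ∀ e ∈ S \ T, ∃ f ∈ T \ S,
        P.coeff (∑ i ∈ insert f (S.erase e), Finsupp.single i 1) ≠ 0 := by
  intro S T hS hT e he
  by_contra hcon
  push_neg at hcon
  obtain ⟨hS1, hT1, hST, hmk, hk1⟩ := St13.cards P S T e hhom hS hT he
  by_cases hk : (T \ S).card = 1
  · -- k = 1 : the exchange with the unique f would give T itself
    have hSTe : S \ T = {e} := by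
      have hc1 : (S \ T).card = 1 := by omega
      obtain ⟨x, hx⟩ := Finset.card_eq_one.mp hc1
      rw [hx] at he ⊢
      rw [Finset.mem_singleton] at he
      rw [he]
    obtain ⟨f, hf⟩ := Finset.card_eq_one.mp hk
    have hfTS : f ∈ T \ S := by rw [hf]; exact Finset.mem_singleton_self f
    apply hT
    have hins : insert f (S.erase e) = T := by
      ext i
      simp only [Finset.mem_insert, Finset.mem_erase]
      constructor
      · rintro (rfl | ⟨hie, hiS⟩)
        · exact (Finset.mem_sdiff.mp hfTS).1
        · by_contra hiT
          have : i ∈ S \ T := Finset.mem_sdiff.mpr ⟨hiS, hiT⟩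
          rw [hSTe, Finset.mem_singleton] at this
          exact hie this
      · intro hiT
        by_cases hiS : i ∈ S
        · right
          refine ⟨fun h => ?_, hiS⟩
          subst h
          exact (Finset.mem_sdiff.mp he).2 hiT
        · left
          have : i ∈ T \ S := Finset.mem_sdiff.mpr ⟨hiT, hiS⟩
          rw [hf, Finset.mem_singleton] at this
          exact this
    rw [← hins]
    exact hcon f hfTS
  · -- k ≥ 2 : main analytic argument
    have hk2 : 2 ≤ (T \ S).card := by omega
    have ha := St13.pa_natDegree P S T e hmaff hhom hS hT he
    have ha0 : St13.pa P S T e ≠ 0 := by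
      intro h
      apply hS
      rw [← St13.pa_coeff_top P S T e hmaff hhom hS hT he, h, Polynomial.coeff_zero]
    have hb0 : St13.pb P S T e ≠ 0 := by
      intro h
      apply hT
      rw [← St13.pb_coeff_zero P S T e hmaff hhom hS hT he, h, Polynomial.coeff_zero]
    have hbd : (St13.pb P S T e).natDegree < (T \ S).card - 1 := by
      have := St13.pb_natDegree_le P S T e hmaff hhom hS hT he hcon
      omega
    obtain ⟨u, v, hu, hv, hvne, hane, hre⟩ :=
      St13.exists_uv ((T \ S).card - 1) (St13.pa P S T e) (St13.pb P S T e) ha ha0 hb0 hbd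
    have hsucc : (T \ S).card - 1 + 1 = (T \ S).card := by omega
    rw [hsucc] at hre
    -- limits of c1, c0
    have h1 := St13.tendsto_sum P S T e u v he
      (P.support.filter (fun D => e ∈ D.support))
    have h2 := St13.tendsto_sum P S T e u v he
      (P.support.filter (fun D => e ∉ D.support))
    rw [St13.A0_eq P S T e u v hmaff hhom hS hT he hvne] at h1
    rw [St13.B0_eq P S T e u v hmaff hhom hS hT he hvne] at h2
    have h1' : Tendsto (fun s : ℝ => St13.c1 P S T e u v s / (s:ℂ) ^ ((S ∩ T).card))
        atTop (𝓝 (v ^ ((T \ S).card - 1) * (St13.pa P S T e).eval (u / v))) := h1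
    have h2' : Tendsto (fun s : ℝ => St13.c0 P S T e u v s / (s:ℂ) ^ ((S ∩ T).card))
        atTop (𝓝 (v ^ ((T \ S).card) * (St13.pb P S T e).eval (u / v))) := h2
    have hA0ne : v ^ ((T \ S).card - 1) * (St13.pa P S T e).eval (u / v) ≠ 0 :=
      mul_ne_zero (pow_ne_zero _ hvne) hane
    have hdd : ∀ (x y t : ℂ), t ≠ 0 → (x / t) / (y / t) = x / y := by
      intro x y t ht
      rcases eq_or_ne y 0 with rfl | hy
      · simp
      · field_simp
    have hζt : Tendsto (fun s : ℝ => -(St13.c0 P S T e u v s) / (St13.c1 P S T e u v s))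
        atTop (𝓝 (-(v ^ ((T \ S).card) * (St13.pb P S T e).eval (u / v))
          / (v ^ ((T \ S).card - 1) * (St13.pa P S T e).eval (u / v)))) := by
      refine ((h2'.neg).div h1' hA0ne).congr' ?_
      filter_upwards [eventually_ge_atTop (1:ℝ)] with s hs
      have hs0 : ((s:ℂ)) ^ ((S ∩ T).card) ≠ 0 := by
        apply pow_ne_zero
        simp only [ne_eq, Complex.ofReal_eq_zero]
        linarith
      show -(St13.c0 P S T e u v s / _) / (St13.c1 P S T e u v s / _) = _
      rw [neg_div, neg_div, hdd _ _ _ hs0]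
    have hζre : ∀ᶠ s : ℝ in atTop,
        0 < ((-(St13.c0 P S T e u v s) / (St13.c1 P S T e u v s)).re) := by
      have := (Complex.continuous_re.tendsto _).comp hζt
      exact this.eventually_const_lt hre
    have hc1ev : ∀ᶠ s : ℝ in atTop, St13.c1 P S T e u v s ≠ 0 := by
      filter_upwards [h1'.eventually_ne hA0ne] with s hs h
      apply hs
      rw [h, zero_div]
    obtain ⟨s, hs1, hs2, hs3⟩ := (hζre.and (hc1ev.and (eventually_gt_atTop (0:ℝ)))).exists
    set ζ : ℂ := -(St13.c0 P S T e u v s) / (St13.c1 P S T e u v s) with hζ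
    apply hP (St13.pt S T e u v ζ s)
    · intro i
      rw [St13.pt]
      split_ifs with hi1 hi2 hi3 hi4
      · exact hs1
      · rw [Complex.ofReal_re]; exact hs3
      · exact hu
      · exact hv
      · rw [← Complex.ofReal_inv, Complex.ofReal_re]
        exact inv_pos.mpr hs3
    · rw [St13.eval_split P S T e u v hmaff ζ s, hζ, mul_comm,
        div_mul_cancel₀ _ hs2, neg_add_cancel]
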